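/- Let G be a finite simple graph with m edges and let W be an irregularising walk of G. Then G admits a proper labelling ℓ whose total label sum satisfies Σ_{e∈E(G)} ℓ(e) ≤ ‖W‖ + m. (Consequently, the minimum total label sum of a proper labelling of a nice graph G is at most ML^W(G) + m.) -/

import Mathlib

open SimpleGraph Finset

variable {V : Type*}

/-- `W.inc u` is the number of edge-traversals of the walk `W` incident to `u`. -/
def SimpleGraph.Walk.inc [DecidableEq V] {G : SimpleGraph V} {a b : V}
    (W : G.Walk a b) (u : V) : ℕ :=
  (W.edges.filter (fun e => u ∈ e)).length

/-- A walk `W` of `G` is irregularising if in the multigraph `G + W` no two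
adjacent vertices have the same degree. -/
def SimpleGraph.Walk.Irregularising [Fintype V] [DecidableEq V] {G : SimpleGraph V}
    [DecidableRel G.Adj] {a b : V} (W : G.Walk a b) : Prop :=
  ∀ ⦃u v : V⦄, G.Adj u v → G.degree u + W.inc u ≠ G.degree v + W.inc v

/-- The vertex sum `σ_ℓ(u)` of a labelling. -/
def vertexSum [Fintype V] [DecidableEq V] (G : SimpleGraph V) [DecidableRel G.Adj]
    (ℓ : Sym2 V → ℕ) (u : V) : ℕ :=
  ∑ w ∈ G.neighborFinset u, ℓ s(u, w)

/-- A labelling is proper if adjacent vertices get distinct sums. -/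
def IsProperLabelling [Fintype V] [DecidableEq V] (G : SimpleGraph V) [DecidableRel G.Adj]
    (ℓ : Sym2 V → ℕ) : Prop :=
  ∀ ⦃u v : V⦄, G.Adj u v → vertexSum G ℓ u ≠ vertexSum G ℓ v

/-- Minimum length of an irregularising walk, as an extended natural number. -/
noncomputable def MLW [Fintype V] [DecidableEq V] (G : SimpleGraph V) [DecidableRel G.Adj] : ℕ∞ :=
  ⨅ (a : V) (b : V) (W : G.Walk a b) (_ : W.Irregularising), (W.length : ℕ∞)

/-- Infimum over irregularising walks of the maximum number of traversals of a single edge. -/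
noncomputable def MEW [Fintype V] [DecidableEq V] (G : SimpleGraph V) [DecidableRel G.Adj] : ℕ∞ :=
  ⨅ (a : V) (b : V) (W : G.Walk a b) (_ : W.Irregularising),
    ((W.edges.toFinset.sup fun e => W.edges.count e : ℕ) : ℕ∞)

/-- Infimum over irregularising walks of `max_u inc_W(u)`. -/
noncomputable def MVW [Fintype V] [DecidableEq V] (G : SimpleGraph V) [DecidableRel G.Adj] : ℕ∞ :=
  ⨅ (a : V) (b : V) (W : G.Walk a b) (_ : W.Irregularising),
    ((Finset.univ.sup fun u => W.inc u : ℕ) : ℕ∞)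


private lemma sum_count_cons {V : Type*} [Fintype V] [DecidableEq V] (G : SimpleGraph V)
    [DecidableRel G.Adj] (u y : V) (hy : G.Adj u y) (t : List (Sym2 V)) :
    ∑ w ∈ G.neighborFinset u, List.count s(u, w) (s(u, y) :: t)
      = (∑ w ∈ G.neighborFinset u, List.count s(u, w) t) + 1 := by
  have hy' : y ∈ G.neighborFinset u := by simpa using hy
  rw [← Finset.sum_erase_add _ _ hy',
    ← Finset.sum_erase_add _ (fun w => List.count s(u, w) t) hy',
    List.count_cons_self,
    Finset.sum_congr rfl (fun w hw => List.count_cons_of_ne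
      (Ne.symm (fun h => (Finset.ne_of_mem_erase hw) (Sym2.congr_right.mp h))))]
  omega

private lemma key_count_sum {V : Type*} [Fintype V] [DecidableEq V] (G : SimpleGraph V)
    [DecidableRel G.Adj] (l : List (Sym2 V)) (hl : ∀ e ∈ l, e ∈ G.edgeSet) (u : V) :
    ∑ w ∈ G.neighborFinset u, l.count s(u, w) = (l.filter (fun e => u ∈ e)).length := by
  induction l with
  | nil => simp
  | cons e t ih =>
    have he : e ∈ G.edgeSet := hl e List.mem_cons_self
    have ht : ∀ e ∈ t, e ∈ G.edgeSet := fun x hx => hl x (List.mem_cons_of_mem _ hx)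
    rw [List.filter_cons]
    by_cases hu : u ∈ e
    · induction e using Sym2.inductionOn with | _ x y => ?_
      have hadj : G.Adj x y := he
      rcases Sym2.mem_iff.mp hu with rfl | rfl
      · rw [sum_count_cons G u y hadj t, ih ht]
        simp [hu]
      · rw [Sym2.eq_swap (a := x) (b := u)] at hu ⊢
        rw [sum_count_cons G u x hadj.symm t, ih ht]
        simp [hu]
    · have : ∀ w ∈ G.neighborFinset u, ¬ (s(u, w) = e) := by
        intro w _ h
        exact hu (h ▸ Sym2.mem_mk_left u w)
      have hsum : ∑ w ∈ G.neighborFinset u, List.count s(u, w) (e :: t)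
          = ∑ w ∈ G.neighborFinset u, List.count s(u, w) t :=
        Finset.sum_congr rfl (fun w hw => List.count_cons_of_ne (Ne.symm (this w hw)))
      rw [hsum, ih ht]
      simp [hu]

/-- If `W` is an irregularising walk of a finite simple graph `G` with
`m` edges, then `G` admits a proper labelling whose total label sum is at most
`‖W‖ + m`. -/
theorem stmt_0 {V : Type*} [Fintype V] [DecidableEq V] (G : SimpleGraph V)
    [DecidableRel G.Adj] {a b : V} (W : G.Walk a b) (hW : W.Irregularising) :
    ∃ ℓ : Sym2 V → ℕ, (∀ e ∈ G.edgeSet, 1 ≤ ℓ e) ∧ IsProperLabelling G ℓ ∧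
      ∑ e ∈ G.edgeFinset, ℓ e ≤ W.length + G.edgeFinset.card := by
  classical
  refine ⟨fun e => 1 + W.edges.count e, fun e _ => le_add_right le_rfl, ?_, ?_⟩
  · have hvs : ∀ u, vertexSum G (fun e => 1 + W.edges.count e) u = G.degree u + W.inc u := by
      intro u
      unfold vertexSum SimpleGraph.Walk.inc
      rw [Finset.sum_add_distrib, Finset.sum_const, smul_eq_mul, mul_one,
        key_count_sum G W.edges (fun e he => W.edges_subset_edgeSet he) u]
      rfl
    intro u v huv
    rw [hvs u, hvs v]
    exact hW huv
  · rw [Finset.sum_add_distrib, Finset.sum_const, smul_eq_mul, mul_one]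
    have hsub : W.edges.toFinset ⊆ G.edgeFinset := by
      intro e he
      rw [List.mem_toFinset] at he
      exact SimpleGraph.mem_edgeFinset.mpr (W.edges_subset_edgeSet he)
    have : ∑ e ∈ G.edgeFinset, W.edges.count e = W.length := by
      have h := Multiset.sum_count_eq_card (s := G.edgeFinset)
        (m := (W.edges : Multiset (Sym2 V)))
        (fun e he => SimpleGraph.mem_edgeFinset.mpr
          (W.edges_subset_edgeSet (by simpa using he)))
      simpa using h
    omega
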